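/- Let k be a positive integer, X a topological space with S(2k)-spread at most κ (κ infinite), C ⊆ X, and for each x ∈ C let U^x be an open S(2k-1)-neighborhood of x. Then there exists an S(2k)-discrete subset A of C with |A| ≤ κ such that C ⊆ θ_{2k}(A) ∪ ⋃{cl(U^x) : x ∈ A}. -/
import Mathlib


open Cardinal Set

universe u

variable {X : Type u}

/-- `x` is S(n)-separated from `A`. -/
def SSep [TopologicalSpace X] : ℕ → X → Set X → Prop
  | 0, x, A => x ∉ closure A
  | (n+1), x, A => ∃ U : ℕ → Set X, (∀ i ≤ n, IsOpen (U i)) ∧ x ∈ U 0 ∧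
      (∀ i < n, closure (U i) ⊆ U (i+1)) ∧ closure (U n) ∩ A = ∅

/-- `X` is an S(n)-space. -/
def SSpace (n : ℕ) (X : Type u) [TopologicalSpace X] : Prop :=
  ∀ x y : X, x ≠ y → SSep n x {y}

/-- `U` is an S(2k-1)-neighborhood of `x` (for `k ≥ 1`). -/
def SOddNhd [TopologicalSpace X] (k : ℕ) (x : X) (U : Set X) : Prop :=
  ∃ V : ℕ → Set X, (∀ i < k, IsOpen (V i)) ∧ x ∈ V 0 ∧
    (∀ i, i + 1 < k → closure (V i) ⊆ V (i+1)) ∧ V (k-1) ⊆ U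

/-- `U` is an S(2k)-neighborhood of `x` (for `k ≥ 1`). -/
def SEvenNhd [TopologicalSpace X] (k : ℕ) (x : X) (U : Set X) : Prop :=
  ∃ V : ℕ → Set X, (∀ i < k, IsOpen (V i)) ∧ x ∈ V 0 ∧
    (∀ i, i + 1 < k → closure (V i) ⊆ V (i+1)) ∧ closure (V (k-1)) ⊆ U

/-- `U` is an open S(2k-1)-neighborhood of `x`. -/
def SOpenNhd [TopologicalSpace X] (k : ℕ) (x : X) (U : Set X) : Prop :=
  IsOpen U ∧ SOddNhd k x U

/-- `U` is an S(2k-1)-open set. -/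
def SOpen [TopologicalSpace X] (k : ℕ) (U : Set X) : Prop :=
  IsOpen U ∧ ∃ x, SOddNhd k x U

/-- The S(2k-1)-closure `θ_{2k-1}(A)`. -/
def thetaOdd [TopologicalSpace X] (k : ℕ) (A : Set X) : Set X :=
  {x | ∀ U : Set X, SOpenNhd k x U → (U ∩ A).Nonempty}

/-- The S(2k)-closure `θ_{2k}(A)`. -/
def thetaEven [TopologicalSpace X] (k : ℕ) (A : Set X) : Set X :=
  {x | ∀ U : Set X, SOpenNhd k x U → (closure U ∩ A).Nonempty}

/-- `D` is S(2k-1)-discrete. -/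
def SOddDiscrete [TopologicalSpace X] (k : ℕ) (D : Set X) : Prop :=
  ∀ x ∈ D, ∃ U : Set X, SOpenNhd k x U ∧ U ∩ D = {x}

/-- `D` is S(2k)-discrete. -/
def SEvenDiscrete [TopologicalSpace X] (k : ℕ) (D : Set X) : Prop :=
  ∀ x ∈ D, ∃ U : Set X, SOpenNhd k x U ∧ closure U ∩ D = {x}

/-- The S(2k-1)-spread `s_{2k-1}(X)`. -/
noncomputable def spreadOdd (k : ℕ) (X : Type u) [TopologicalSpace X] : Cardinal :=
  (⨆ D : {D : Set X // SOddDiscrete k D}, #D.1) ⊔ Cardinal.aleph0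

/-- The S(2k)-spread `s_{2k}(X)`. -/
noncomputable def spreadEven (k : ℕ) (X : Type u) [TopologicalSpace X] : Cardinal :=
  (⨆ D : {D : Set X // SEvenDiscrete k D}, #D.1) ⊔ Cardinal.aleph0

/-- The S(2k-1)-cellularity `c_{2k-1}(X)`. -/
noncomputable def cellOdd (k : ℕ) (X : Type u) [TopologicalSpace X] : Cardinal :=
  (⨆ F : {F : Set (Set X) // (∀ U ∈ F, SOpen k U ∧ U.Nonempty) ∧
      (∀ U ∈ F, ∀ V ∈ F, U ≠ V → U ∩ V = ∅)}, #F.1) ⊔ Cardinal.aleph0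

/-- The S(2k)-cellularity `c_{2k}(X)`. -/
noncomputable def cellEven (k : ℕ) (X : Type u) [TopologicalSpace X] : Cardinal :=
  (⨆ F : {F : Set (Set X) // (∀ U ∈ F, SOpen k U ∧ U.Nonempty) ∧
      (∀ U ∈ F, ∀ V ∈ F, U ≠ V → closure U ∩ closure V = ∅)}, #F.1) ⊔ Cardinal.aleph0

/-- The S(2k-1)-character `χ_{2k-1}(X)`. -/
noncomputable def charOdd (k : ℕ) (X : Type u) [TopologicalSpace X] : Cardinal :=
  sInf {c | Cardinal.aleph0 ≤ c ∧ ∀ x : X, ∃ B : Set (Set X), #B ≤ c ∧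
    (∀ U ∈ B, SOpenNhd k x U) ∧
    ∀ U : Set X, SOpenNhd k x U → ∃ V ∈ B, V ⊆ U}

/-- The S(2k)-character `χ_{2k}(X)`. -/
noncomputable def charEven (k : ℕ) (X : Type u) [TopologicalSpace X] : Cardinal :=
  sInf {c | Cardinal.aleph0 ≤ c ∧ ∀ x : X, ∃ B : Set (Set X), #B ≤ c ∧
    (∀ V ∈ B, IsClosed V ∧ SOddNhd k x V) ∧
    ∀ W : Set X, SOpenNhd k x W → ∃ V ∈ B, V ⊆ closure W}

/-- The S(2k-1)-pseudocharacter `ψ_{2k-1}(X)`. -/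
noncomputable def psiOdd (k : ℕ) (X : Type u) [TopologicalSpace X] : Cardinal :=
  sInf {c | Cardinal.aleph0 ≤ c ∧ ∀ x : X, ∃ B : Set (Set X), #B ≤ c ∧
    (∀ U ∈ B, SOpenNhd k x U) ∧ ⋂₀ B = {x}}

/-- The S(2k)-pseudocharacter `ψ_{2k}(X)`. -/
noncomputable def psiEven (k : ℕ) (X : Type u) [TopologicalSpace X] : Cardinal :=
  sInf {c | Cardinal.aleph0 ≤ c ∧ ∀ x : X, ∃ B : Set (Set X), #B ≤ c ∧
    (∀ U ∈ B, SOpenNhd k x U) ∧ (⋂ U ∈ B, closure U) = {x}}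

/-- The usual pseudocharacter `ψ(X)`. -/
noncomputable def psi (X : Type u) [TopologicalSpace X] : Cardinal :=
  sInf {c | Cardinal.aleph0 ≤ c ∧ ∀ x : X, ∃ B : Set (Set X), #B ≤ c ∧
    (∀ U ∈ B, IsOpen U) ∧ ⋂₀ B = {x}}

lemma SOddNhd.mem' [TopologicalSpace X] {k : ℕ} (hk : 1 ≤ k) {x : X} {U : Set X}
    (h : SOddNhd k x U) : x ∈ U := by
  obtain ⟨V, _, hx, hchain, hsub⟩ := h
  have key : ∀ i, i ≤ k - 1 → x ∈ V i := by
    intro i hi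
    induction i with
    | zero => exact hx
    | succ n ih =>
      have hn : n + 1 < k := by omega
      exact hchain n hn (subset_closure (ih (by omega)))
  exact hsub (key (k-1) le_rfl)

lemma SOpenNhd.inter' [TopologicalSpace X] {k : ℕ} {x : X} {U W : Set X}
    (hU : SOpenNhd k x U) (hW : SOpenNhd k x W) : SOpenNhd k x (U ∩ W) := by
  obtain ⟨hUo, V, hVo, hxV, hVc, hVs⟩ := hU
  obtain ⟨hWo, V', hVo', hxV', hVc', hVs'⟩ := hW
  refine ⟨hUo.inter hWo, fun i => V i ∩ V' i, fun i hi => (hVo i hi).inter (hVo' i hi),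
    ⟨hxV, hxV'⟩, ?_, inter_subset_inter hVs hVs'⟩
  intro i hi
  have : closure (V i ∩ V' i) ⊆ closure (V i) ∩ closure (V' i) :=
    subset_inter (closure_mono inter_subset_left) (closure_mono inter_subset_right)
  exact this.trans (inter_subset_inter (hVc i hi) (hVc' i hi))

theorem stmt10 (k : ℕ) (hk : 1 ≤ k) (X : Type u) [TopologicalSpace X]
    (κ : Cardinal) (hκ : Cardinal.aleph0 ≤ κ) (hs : spreadEven k X ≤ κ)
    (C : Set X) (U : X → Set X) (hU : ∀ x ∈ C, SOpenNhd k x (U x)) :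
    ∃ A : Set X, A ⊆ C ∧ SEvenDiscrete k A ∧ #A ≤ κ ∧
      C ⊆ thetaEven k A ∪ ⋃ x ∈ A, closure (U x) := by
  classical
  -- Good families of pairs (x, W)
  set Good : Set (Set (X × Set X)) :=
    {G | ∀ p ∈ G, p.1 ∈ C ∧ SOpenNhd k p.1 p.2 ∧ p.2 ⊆ U p.1 ∧
      ∀ q ∈ G, q.1 ∈ closure p.2 → q.1 = p.1} with hGood
  obtain ⟨G, hGmem, hGmax⟩ : ∃ G, Maximal (· ∈ Good) G := by
    apply zorn_subset
    intro c hc hchain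
    refine ⟨⋃₀ c, ?_, fun s hs => subset_sUnion_of_mem hs⟩
    rintro p ⟨G₁, hG₁, hpG₁⟩
    obtain ⟨h1, h2, h3, _⟩ := hc hG₁ p hpG₁
    refine ⟨h1, h2, h3, ?_⟩
    rintro q ⟨G₂, hG₂, hqG₂⟩ hq
    rcases hchain.total hG₁ hG₂ with h | h
    · exact (hc hG₂ p (h hpG₁)).2.2.2 q hqG₂ hq
    · exact (hc hG₁ p hpG₁).2.2.2 q (h hqG₂) hq
  set A : Set X := Prod.fst '' G with hA
  have hAC : A ⊆ C := by
    rintro x ⟨p, hp, rfl⟩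
    exact (hGmem p hp).1
  have hdisc : SEvenDiscrete k A := by
    rintro x ⟨p, hp, rfl⟩
    obtain ⟨_, hnhd, _, hsep⟩ := hGmem p hp
    refine ⟨p.2, hnhd, ?_⟩
    apply Subset.antisymm
    · rintro y ⟨hy1, q, hq, rfl⟩
      exact hsep q hq hy1
    · rintro y rfl
      exact ⟨subset_closure (hnhd.2.mem' hk), ⟨p, hp, rfl⟩⟩
  refine ⟨A, hAC, hdisc, ?_, ?_⟩
  · calc #A ≤ ⨆ D : {D : Set X // SEvenDiscrete k D}, #D.1 :=
          le_ciSup (f := fun D : {D : Set X // SEvenDiscrete k D} => #D.1)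
            (Cardinal.bddAbove_range _) ⟨A, hdisc⟩
      _ ≤ spreadEven k X := le_sup_left
      _ ≤ κ := hs
  · intro y hyC
    by_cases hy : y ∈ ⋃ x ∈ A, closure (U x)
    · exact Or.inr hy
    left
    intro W₀ hW₀
    by_contra hne
    rw [Set.not_nonempty_iff_eq_empty] at hne
    have hUy : SOpenNhd k y (U y) := hU y hyC
    have hW : SOpenNhd k y (W₀ ∩ U y) := hW₀.inter' hUy
    have hyA : y ∉ A := by
      intro hyA
      exact hy (Set.mem_biUnion hyA (subset_closure (hUy.2.mem' hk)))
    have hnotmem : (y, W₀ ∩ U y) ∉ G := fun h => hyA ⟨_, h, rfl⟩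
    have hgood : insert (y, W₀ ∩ U y) G ∈ Good := by
      rintro p hp
      rcases hp with rfl | hp
      · refine ⟨hyC, hW, inter_subset_right, ?_⟩
        rintro q hq hqcl
        rcases hq with rfl | hq
        · rfl
        · exfalso
          have hqA : q.1 ∈ A := ⟨q, hq, rfl⟩
          have : q.1 ∈ closure W₀ ∩ A :=
            ⟨closure_mono inter_subset_left hqcl, hqA⟩
          rw [hne] at this
          exact this
      · obtain ⟨h1, h2, h3, hsep⟩ := hGmem p hp
        refine ⟨h1, h2, h3, ?_⟩
        rintro q hq hqcl
        rcases hq with rfl | hq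
        · exfalso
          apply hy
          exact Set.mem_biUnion (⟨p, hp, rfl⟩ : p.1 ∈ A) (closure_mono h3 hqcl)
        · exact hsep q hq hqcl
    exact hnotmem (hGmax hgood (subset_insert _ _) (mem_insert _ _))
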